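/- Let s_1 ≤ s_2 ≤ ... ≤ s_n be positive reals and let f map each index to a representative value such that f(i) ≥ s_i (no compression). For a partition of {1,...,n} into blocks where each block's cost is (size of block) × (max of s over the block), there exists a monotone (contiguous, order-respecting) partition with the same block sizes whose total cost is at most the cost of the original partition. -/
import Mathlib


open scoped NNReal

/-- for any partition of the index set into blocks with cost
    (block size) × (max of s over block), there is a monotone (order-respecting,
    contiguous) partition with the same multiset of block sizes and no larger cost. -/
theorem stmt_0 (n : ℕ) (s : Fin n → ℝ≥0) (hmono : Monotone s) (hpos : ∀ i, 0 < s i)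
    (f : Fin n → ℝ≥0) (hf : ∀ i, s i ≤ f i)
    (P : Finset (Finset (Fin n)))
    (hPne : ∀ B ∈ P, B.Nonempty)
    (hPdisj : (P : Set (Finset (Fin n))).PairwiseDisjoint id)
    (hPcover : ∀ i : Fin n, ∃ B ∈ P, i ∈ B) :
    ∃ Q : Finset (Finset (Fin n)),
      (∀ B ∈ Q, B.Nonempty) ∧
      (Q : Set (Finset (Fin n))).PairwiseDisjoint id ∧
      (∀ i : Fin n, ∃ B ∈ Q, i ∈ B) ∧
      (∀ B ∈ Q, ∀ i j k : Fin n, i ∈ B → k ∈ B → i ≤ j → j ≤ k → j ∈ B) ∧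
      P.val.map Finset.card = Q.val.map Finset.card ∧
      ∑ B ∈ Q, (B.card : ℝ≥0) * B.sup s ≤ ∑ B ∈ P, (B.card : ℝ≥0) * B.sup s := by
  classical
  set mx : Finset (Fin n) → ℕ := fun B => B.sup (fun i => (i : ℕ)) with hmxdef
  have hwit : ∀ B ∈ P, ∃ i ∈ B, (i : ℕ) = mx B := by
    intro B hB
    obtain ⟨i, hi, hieq⟩ := Finset.exists_mem_eq_sup B (hPne B hB) (fun i => (i : ℕ))
    exact ⟨i, hi, hieq.symm⟩
  have hle_mx : ∀ (B : Finset (Fin n)), ∀ i ∈ B, (i : ℕ) ≤ mx B := by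
    intro B i hi
    simp only [hmxdef]
    exact Finset.le_sup (f := fun i : Fin n => (i : ℕ)) hi
  have hmxinj : ∀ B ∈ P, ∀ B' ∈ P, mx B = mx B' → B = B' := by
    intro B hB B' hB' h
    by_contra hne
    obtain ⟨i, hi, hieq⟩ := hwit B hB
    obtain ⟨i', hi', hieq'⟩ := hwit B' hB'
    have hii : i = i' := Fin.val_injective (by omega)
    have hd : Disjoint B B' := hPdisj (Finset.mem_coe.2 hB) (Finset.mem_coe.2 hB') hne
    exact Finset.disjoint_left.1 hd hi (hii ▸ hi')
  -- total size is n
  have hcover' : P.biUnion id = Finset.univ := by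
    ext i
    simp only [Finset.mem_biUnion, id, Finset.mem_univ, iff_true]
    exact hPcover i
  have hdisj' : ∀ B ∈ P, ∀ B' ∈ P, B ≠ B' → Disjoint (id B) (id B') := by
    intro B hB B' hB' hne
    exact hPdisj (Finset.mem_coe.2 hB) (Finset.mem_coe.2 hB') hne
  have htot : ∑ B ∈ P, B.card = n := by
    have h := Finset.card_biUnion hdisj'
    rw [hcover'] at h
    simpa using h.symm
  set N : Finset (Fin n) → ℕ :=
    fun B => ∑ C ∈ P.filter (fun C => mx C ≤ mx B), C.card with hNdef
  have hNle : ∀ B, N B ≤ n := by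
    intro B
    calc N B ≤ ∑ C ∈ P, C.card :=
          Finset.sum_le_sum_of_subset (Finset.filter_subset _ _)
      _ = n := htot
  have hcardleN : ∀ B ∈ P, B.card ≤ N B := by
    intro B hB
    simp only [hNdef]
    exact Finset.single_le_sum (f := fun C : Finset (Fin n) => C.card) (fun _ _ => Nat.zero_le _)
      (Finset.mem_filter.2 ⟨hB, le_rfl⟩)
  have hNmx : ∀ B ∈ P, N B ≤ mx B + 1 := by
    intro B hB
    set T : Finset (Fin n) := Finset.univ.filter (fun i : Fin n => (i : ℕ) ≤ mx B) with hT
    have hsub : ((P.filter (fun C => mx C ≤ mx B)).biUnion id) ⊆ T := by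
      intro i hi
      obtain ⟨C, hC, hiC⟩ := Finset.mem_biUnion.1 hi
      have hC' := Finset.mem_filter.1 hC
      exact Finset.mem_filter.2 ⟨Finset.mem_univ _, le_trans (hle_mx C i hiC) hC'.2⟩
    have hcardT : T.card ≤ mx B + 1 := by
      have himg : T.image (fun i : Fin n => (i : ℕ)) ⊆ Finset.range (mx B + 1) := by
        intro m hm
        obtain ⟨i, hi, rfl⟩ := Finset.mem_image.1 hm
        exact Finset.mem_range.2 (Nat.lt_succ_of_le (Finset.mem_filter.1 hi).2)
      calc T.card = (T.image (fun i : Fin n => (i : ℕ))).card :=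
            (Finset.card_image_of_injective T Fin.val_injective).symm
        _ ≤ (Finset.range (mx B + 1)).card := Finset.card_le_card himg
        _ = mx B + 1 := Finset.card_range _
    have hdisj'' : ∀ C ∈ P.filter (fun C => mx C ≤ mx B),
        ∀ C' ∈ P.filter (fun C => mx C ≤ mx B), C ≠ C' → Disjoint (id C) (id C') := by
      intro C hC C' hC' hne
      exact hdisj' C (Finset.mem_filter.1 hC).1 C' (Finset.mem_filter.1 hC').1 hne
    calc N B = ((P.filter (fun C => mx C ≤ mx B)).biUnion id).card :=
          (Finset.card_biUnion hdisj'').symm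
      _ ≤ T.card := Finset.card_le_card hsub
      _ ≤ mx B + 1 := hcardT
  have hchain : ∀ B ∈ P, ∀ B' ∈ P, mx B < mx B' → N B + B'.card ≤ N B' := by
    intro B hB B' hB' h
    have hB'notin : B' ∉ P.filter (fun C => mx C ≤ mx B) := by
      intro hmem
      exact absurd (Finset.mem_filter.1 hmem).2 (not_le.2 h)
    have hsub : insert B' (P.filter (fun C => mx C ≤ mx B)) ⊆
        P.filter (fun C => mx C ≤ mx B') := by
      intro C hC
      rcases Finset.mem_insert.1 hC with rfl | hC
      · exact Finset.mem_filter.2 ⟨hB', le_rfl⟩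
      · have hC' := Finset.mem_filter.1 hC
        exact Finset.mem_filter.2 ⟨hC'.1, le_trans hC'.2 h.le⟩
    calc N B + B'.card = ∑ C ∈ insert B' (P.filter (fun C => mx C ≤ mx B)), C.card := by
          rw [Finset.sum_insert hB'notin]; ring
      _ ≤ N B' := Finset.sum_le_sum_of_subset hsub
  -- the interval map
  set φ : Finset (Fin n) → Finset (Fin n) := fun B =>
    Finset.attachFin (Finset.Ico (N B - B.card) (N B))
      (fun m hm => lt_of_lt_of_le (Finset.mem_Ico.1 hm).2 (hNle B)) with hφdef
  have hmemφ : ∀ (B : Finset (Fin n)) (i : Fin n),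
      i ∈ φ B ↔ (N B - B.card ≤ (i : ℕ) ∧ (i : ℕ) < N B) := by
    intro B i
    rw [hφdef]
    simp [Finset.mem_attachFin, Finset.mem_Ico]
  have hcardφ : ∀ B ∈ P, (φ B).card = B.card := by
    intro B hB
    have h1 := hcardleN B hB
    rw [hφdef]
    simp only [Finset.card_attachFin, Nat.card_Ico]
    omega
  have hφdisj : ∀ B ∈ P, ∀ B' ∈ P, B ≠ B' → Disjoint (φ B) (φ B') := by
    intro B hB B' hB' hne
    have hmxne : mx B ≠ mx B' := fun h => hne (hmxinj B hB B' hB' h)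
    rw [Finset.disjoint_left]
    intro i hi hi'
    rw [hmemφ] at hi hi'
    rcases lt_or_gt_of_ne hmxne with h | h
    · have h1 := hchain B hB B' hB' h
      have h2 := hcardleN B' hB'
      omega
    · have h1 := hchain B' hB' B hB h
      have h2 := hcardleN B hB
      omega
  have hφne : ∀ B ∈ P, (φ B).Nonempty := by
    intro B hB
    rw [← Finset.card_pos, hcardφ B hB, Finset.card_pos]
    exact hPne B hB
  have hφinj : ∀ B ∈ P, ∀ B' ∈ P, φ B = φ B' → B = B' := by
    intro B hB B' hB' h
    by_contra hne
    obtain ⟨i, hi⟩ := hφne B hB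
    exact Finset.disjoint_left.1 (hφdisj B hB B' hB' hne) hi (h ▸ hi)
  refine ⟨P.image φ, ?_, ?_, ?_, ?_, ?_, ?_⟩
  · intro B'' hB''
    obtain ⟨B, hB, rfl⟩ := Finset.mem_image.1 hB''
    exact hφne B hB
  · intro x hx y hy hxy
    obtain ⟨B, hB, rfl⟩ := Finset.mem_image.1 (Finset.mem_coe.1 hx)
    obtain ⟨B', hB', rfl⟩ := Finset.mem_image.1 (Finset.mem_coe.1 hy)
    have hne : B ≠ B' := fun h => hxy (by rw [h])
    exact hφdisj B hB B' hB' hne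
  · -- cover via cardinality
    have hsum : ∑ B'' ∈ P.image φ, B''.card = n := by
      rw [Finset.sum_image (fun x hx y hy => hφinj x hx y hy)]
      rw [Finset.sum_congr rfl (fun B hB => hcardφ B hB)]
      exact htot
    have hdisjQ : ∀ B ∈ P.image φ, ∀ B' ∈ P.image φ, B ≠ B' → Disjoint (id B) (id B') := by
      intro x hx y hy hxy
      obtain ⟨B, hB, rfl⟩ := Finset.mem_image.1 hx
      obtain ⟨B', hB', rfl⟩ := Finset.mem_image.1 hy
      exact hφdisj B hB B' hB' (fun h => hxy (by rw [h]))
    have hcardU : ((P.image φ).biUnion id).card = n := by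
      rw [Finset.card_biUnion hdisjQ]; exact hsum
    have hU : ((P.image φ).biUnion id) = Finset.univ := by
      apply Finset.eq_univ_of_card
      simpa using hcardU
    intro i
    have : i ∈ (P.image φ).biUnion id := hU ▸ Finset.mem_univ i
    obtain ⟨B, hB, hiB⟩ := Finset.mem_biUnion.1 this
    exact ⟨B, hB, hiB⟩
  · -- contiguity
    intro B'' hB'' i j k hi hk hij hjk
    obtain ⟨B, hB, rfl⟩ := Finset.mem_image.1 hB''
    rw [hmemφ] at hi hk ⊢
    have h1 : (i : ℕ) ≤ (j : ℕ) := hij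
    have h2 : (j : ℕ) ≤ (k : ℕ) := hjk
    omega
  · -- multiset of cards
    rw [Finset.image_val_of_injOn (fun x hx y hy => hφinj x (Finset.mem_coe.1 hx) y (Finset.mem_coe.1 hy))]
    rw [Multiset.map_map]
    exact (Multiset.map_congr rfl (fun B hB => hcardφ B (Finset.mem_coe.1 (Finset.mem_coe.2 hB)))).symm
  · -- cost
    rw [Finset.sum_image (fun x hx y hy => hφinj x hx y hy)]
    apply Finset.sum_le_sum
    intro B hB
    rw [hcardφ B hB]
    apply mul_le_mul_right
    apply Finset.sup_le
    intro i hi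
    obtain ⟨w, hw, hweq⟩ := hwit B hB
    have hiN : (i : ℕ) < N B := ((hmemφ B i).1 hi).2
    have hNm := hNmx B hB
    have hiw : i ≤ w := by
      rw [Fin.le_def]; omega
    exact le_trans (hmono hiw) (Finset.le_sup hw)
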